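/- arXiv:1607.08419 — 2 statements merged into one kernel-verified Lean document; each statement's English description precedes it below -/
import Mathlib

section
/- Let n and r be integers with 3 < r < n, and set P = e_1 · e_{r−1}, a homogeneous polynomial of degree r in n variables. Then g ∈ GL_n(ℂ) satisfies P(g·x) = P(x) for all x ∈ ℂⁿ if and only if g satisfies e_r(g·x) = e_r(x) for all x ∈ ℂⁿ; that is, the stabilizer of e_1·e_{r−1} in GL_n(ℂ) equals the stabilizer of e_r. In particular, e_r is not the only homogeneous degree-r polynomial with stabilizer isomorphic to S_n ⋊ ℤ_r. -/
/-- The `k`-th elementary symmetric polynomial in `n` variables, evaluated at `x : Fin n → ℂ`. -/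
noncomputable def esymm (n k : ℕ) (x : Fin n → ℂ) : ℂ :=
  ∑ I ∈ Finset.powersetCard k Finset.univ, ∏ i ∈ I, x i

namespace StabAux
open Finset Polynomial

variable {n : ℕ}

noncomputable def ind (C : Finset (Fin n)) : Fin n → ℂ := fun i => if i ∈ C then 1 else 0

noncomputable def expPoly (n k : ℕ) (y c : Fin n → ℂ) : Polynomial ℂ :=
  ∑ T ∈ Finset.powersetCard k (Finset.univ : Finset (Fin n)), ∑ U ∈ T.powerset,
    Polynomial.C ((∏ i ∈ U, c i) * ∏ i ∈ T \ U, y i) * Polynomial.X ^ U.card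

lemma expPoly_eval (k : ℕ) (y c : Fin n → ℂ) (t : ℂ) :
    (expPoly n k y c).eval t = esymm n k (fun i => y i + t * c i) := by
  unfold expPoly esymm
  rw [Polynomial.eval_finset_sum]
  refine Finset.sum_congr rfl fun T _ => ?_
  rw [Polynomial.eval_finset_sum]
  calc (∑ U ∈ T.powerset, (Polynomial.C ((∏ i ∈ U, c i) * ∏ i ∈ T \ U, y i)
          * Polynomial.X ^ U.card).eval t)
      = ∑ U ∈ T.powerset, (∏ i ∈ U, t * c i) * ∏ i ∈ T \ U, y i := by
        refine Finset.sum_congr rfl fun U _ => ?_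
        simp [Polynomial.eval_prod, Finset.prod_mul_distrib, Finset.prod_const]
        ring
    _ = ∏ i ∈ T, (t * c i + y i) := (Finset.prod_add _ _ T).symm
    _ = ∏ i ∈ T, (y i + t * c i) := by
        refine Finset.prod_congr rfl fun i _ => add_comm _ _

lemma expPoly_coeff (k : ℕ) (y c : Fin n → ℂ) (m : ℕ) :
    (expPoly n k y c).coeff m = ∑ T ∈ Finset.powersetCard k (Finset.univ : Finset (Fin n)),
      ∑ U ∈ Finset.powersetCard m T, (∏ i ∈ U, c i) * ∏ i ∈ T \ U, y i := by
  unfold expPoly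
  rw [Polynomial.finset_sum_coeff]
  refine Finset.sum_congr rfl fun T _ => ?_
  rw [Polynomial.finset_sum_coeff, powersetCard_eq_filter, Finset.sum_filter]
  refine Finset.sum_congr rfl fun U _ => ?_
  rw [Polynomial.coeff_C_mul, Polynomial.coeff_X_pow]
  by_cases h : U.card = m <;> simp [h]
  intro h'; exact absurd h'.symm h

lemma prod_ind (C s : Finset (Fin n)) :
    (∏ i ∈ s, ind C i) = if s ⊆ C then 1 else 0 := by
  by_cases h : s ⊆ C
  · rw [if_pos h]
    refine Finset.prod_eq_one fun i hi => ?_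
    simp [ind, h hi]
  · rw [if_neg h]
    obtain ⟨i, hi, hiC⟩ := Finset.not_subset.1 h
    exact Finset.prod_eq_zero hi (by simp [ind, hiC])

lemma esymm_ind (k : ℕ) (C : Finset (Fin n)) :
    esymm n k (ind C) = (C.card.choose k : ℂ) := by
  unfold esymm
  have hfil : (Finset.powersetCard k (Finset.univ : Finset (Fin n))).filter (fun T => T ⊆ C)
      = Finset.powersetCard k C := by
    ext T
    simp only [Finset.mem_filter, Finset.mem_powersetCard]
    constructor
    · rintro ⟨⟨-, h2⟩, h3⟩; exact ⟨h3, h2⟩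
    · rintro ⟨h1, h2⟩; exact ⟨⟨Finset.subset_univ _, h2⟩, h1⟩
  rw [Finset.sum_congr rfl fun T _ => prod_ind C T, Finset.sum_ite, Finset.sum_const,
    Finset.sum_const, hfil]
  simp

lemma esymm_one_eq (x : Fin n → ℂ) : esymm n 1 x = ∑ i, x i := by
  unfold esymm
  rw [Finset.powersetCard_one, Finset.sum_map]
  simp


lemma count_T (k : ℕ) (C U : Finset (Fin n)) (hC : C.card + 2 = k) (hU : U.card = 2) :
    ∑ T ∈ Finset.powersetCard k (Finset.univ : Finset (Fin n)),
      (if U ⊆ T then (if T \ U ⊆ C then (1:ℂ) else 0) else 0)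
    = if U ⊆ Cᶜ then 1 else 0 := by
  classical
  have hsummand : ∀ T : Finset (Fin n),
      (if U ⊆ T then (if T \ U ⊆ C then (1:ℂ) else 0) else 0)
      = if (U ⊆ T ∧ T \ U ⊆ C) then 1 else 0 := by
    intro T; by_cases h1 : U ⊆ T <;> by_cases h2 : T \ U ⊆ C <;> simp [h1, h2]
  rw [Finset.sum_congr rfl fun T _ => hsummand T]
  rw [Finset.sum_ite, Finset.sum_const, Finset.sum_const]
  simp only [nsmul_eq_mul, smul_zero, mul_one, add_zero]
  have key : ∀ T : Finset (Fin n), T.card = k → U ⊆ T → T \ U ⊆ C → T \ U = C := by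
    intro T hcard hUT hTC
    refine Finset.eq_of_subset_of_card_le hTC ?_
    rw [Finset.card_sdiff_of_subset hUT, hcard, hU]
    omega
  by_cases hd : U ⊆ Cᶜ
  · have hdis : Disjoint U C := Finset.disjoint_left.mpr fun a ha hc => by
      have := hd ha; rw [Finset.mem_compl] at this; exact this hc
    have hfil : (Finset.powersetCard k (Finset.univ : Finset (Fin n))).filter
        (fun T => U ⊆ T ∧ T \ U ⊆ C) = {U ∪ C} := by
      ext T
      simp only [Finset.mem_filter, Finset.mem_powersetCard, Finset.mem_singleton]
      constructor
      · rintro ⟨⟨-, hcard⟩, hUT, hTC⟩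
        have h2 := key T hcard hUT hTC
        have h3 := Finset.union_sdiff_of_subset hUT
        rw [h2] at h3; exact h3.symm
      · rintro rfl
        refine ⟨⟨Finset.subset_univ _, ?_⟩, Finset.subset_union_left, ?_⟩
        · rw [Finset.card_union_of_disjoint hdis, hU]; omega
        · rw [Finset.union_sdiff_cancel_left hdis]
      
    rw [if_pos hd, hfil]; simp
  · have hfil : (Finset.powersetCard k (Finset.univ : Finset (Fin n))).filter
        (fun T => U ⊆ T ∧ T \ U ⊆ C) = ∅ := by
      rw [Finset.filter_eq_empty_iff]
      rintro T hT ⟨hUT, hTC⟩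
      rw [Finset.mem_powersetCard] at hT
      have h2 := key T hT.2 hUT hTC
      refine hd fun a ha => ?_
      rw [Finset.mem_compl]
      intro hc
      rw [← h2] at hc
      exact (Finset.mem_sdiff.1 hc).2 ha
    rw [if_neg hd, hfil]; simp

lemma pcard_filter_subset (m : ℕ) (C : Finset (Fin n)) :
    (Finset.powersetCard m (Finset.univ : Finset (Fin n))).filter (fun T => T ⊆ C)
      = Finset.powersetCard m C := by
  ext T
  simp only [Finset.mem_filter, Finset.mem_powersetCard]
  constructor
  · rintro ⟨⟨-, h2⟩, h3⟩; exact ⟨h3, h2⟩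
  · rintro ⟨h1, h2⟩; exact ⟨⟨Finset.subset_univ _, h2⟩, h1⟩

lemma dsum_ind (k : ℕ) (c : Fin n → ℂ) (C : Finset (Fin n)) (hC : C.card + 2 = k) :
    ∑ T ∈ Finset.powersetCard k (Finset.univ : Finset (Fin n)),
      ∑ U ∈ Finset.powersetCard 2 T, (∏ i ∈ U, c i) * ∏ i ∈ T \ U, ind C i
    = ∑ U ∈ Finset.powersetCard 2 Cᶜ, ∏ i ∈ U, c i := by
  classical
  have h1 : ∀ T : Finset (Fin n), Finset.powersetCard 2 T
      = (Finset.powersetCard 2 (Finset.univ : Finset (Fin n))).filter (fun U => U ⊆ T) :=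
    fun T => (pcard_filter_subset 2 T).symm
  calc ∑ T ∈ Finset.powersetCard k (Finset.univ : Finset (Fin n)),
        ∑ U ∈ Finset.powersetCard 2 T, (∏ i ∈ U, c i) * ∏ i ∈ T \ U, ind C i
      = ∑ U ∈ Finset.powersetCard 2 (Finset.univ : Finset (Fin n)), (∏ i ∈ U, c i) *
          ∑ T ∈ Finset.powersetCard k (Finset.univ : Finset (Fin n)),
            (if U ⊆ T then (if T \ U ⊆ C then (1:ℂ) else 0) else 0) := by
        have e1 : ∀ T ∈ Finset.powersetCard k (Finset.univ : Finset (Fin n)),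
            ∑ U ∈ Finset.powersetCard 2 T, (∏ i ∈ U, c i) * ∏ i ∈ T \ U, ind C i
            = ∑ U ∈ Finset.powersetCard 2 (Finset.univ : Finset (Fin n)),
                (if U ⊆ T then (∏ i ∈ U, c i) * (if T \ U ⊆ C then (1:ℂ) else 0) else 0) := by
          intro T _
          rw [h1 T, Finset.sum_filter]
          refine Finset.sum_congr rfl fun U _ => ?_
          by_cases h : U ⊆ T
          · rw [if_pos h, if_pos h, prod_ind]
          · rw [if_neg h, if_neg h]
        rw [Finset.sum_congr rfl e1, Finset.sum_comm]
        refine Finset.sum_congr rfl fun U _ => ?_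
        rw [Finset.mul_sum]
        refine Finset.sum_congr rfl fun T _ => ?_
        by_cases h : U ⊆ T
        · rw [if_pos h, if_pos h]
        · rw [if_neg h, if_neg h, mul_zero]
    _ = ∑ U ∈ Finset.powersetCard 2 (Finset.univ : Finset (Fin n)), (∏ i ∈ U, c i) *
          (if U ⊆ Cᶜ then 1 else 0) := by
        refine Finset.sum_congr rfl fun U hU => ?_
        rw [count_T k C U hC (Finset.mem_powersetCard.1 hU).2]
    _ = ∑ U ∈ Finset.powersetCard 2 Cᶜ, ∏ i ∈ U, c i := by
        rw [← pcard_filter_subset 2 Cᶜ, Finset.sum_filter]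
        refine Finset.sum_congr rfl fun U _ => ?_
        by_cases h : U ⊆ Cᶜ <;> simp [h]

lemma two_mul_e2 (c : Fin n → ℂ) (D : Finset (Fin n)) :
    2 * ∑ U ∈ Finset.powersetCard 2 D, ∏ i ∈ U, c i
      = (∑ i ∈ D, c i)^2 - ∑ i ∈ D, (c i)^2 := by
  classical
  induction D using Finset.induction_on with
  | empty =>
    rw [Finset.powersetCard_eq_empty.2 (by simp)]
    simp
  | insert a s ha ih =>
    rw [Finset.powersetCard_succ_insert ha 1]
    rw [Finset.sum_union]
    · rw [Finset.sum_image (fun x hx y hy hxy => by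
        have hax : a ∉ x := fun h => ha ((Finset.mem_powersetCard.1 hx).1 h)
        have hay : a ∉ y := fun h => ha ((Finset.mem_powersetCard.1 hy).1 h)
        rw [← Finset.erase_insert hax, hxy, Finset.erase_insert hay])]
      have h2 : ∀ U ∈ Finset.powersetCard 1 s, ∏ i ∈ insert a U, c i = c a * ∏ i ∈ U, c i := by
        intro U hU
        exact Finset.prod_insert (fun h => ha ((Finset.mem_powersetCard.1 hU).1 h))
      rw [Finset.sum_congr rfl h2, ← Finset.mul_sum]
      have h3 : ∑ U ∈ Finset.powersetCard 1 s, ∏ i ∈ U, c i = ∑ i ∈ s, c i := by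
        rw [Finset.powersetCard_one, Finset.sum_map]
        simp
      rw [h3, Finset.sum_insert ha, Finset.sum_insert ha]
      linear_combination ih
    · rw [Finset.disjoint_left]
      intro U hU hU2
      obtain ⟨V, hV, rfl⟩ := Finset.mem_image.1 hU2
      exact ha ((Finset.mem_powersetCard.1 hU).1 (Finset.mem_insert_self a V))

lemma lemL (c : Fin n → ℂ) (p : ℕ) (hp3 : 3 ≤ p) (hpn : p + 1 ≤ n)
    (H : ∀ D : Finset (Fin n), D.card = p →
      ∑ U ∈ Finset.powersetCard 2 D, ∏ i ∈ U, c i = 0) :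
    ∀ a b : Fin n, a ≠ b → c a * c b = 0 := by
  classical
  have P : ∀ q, p ≤ q → q ≤ n → ∀ D : Finset (Fin n), D.card = q →
      (∑ i ∈ D, c i)^2 = ∑ i ∈ D, (c i)^2 := by
    intro q hq
    induction q, hq using Nat.le_induction with
    | base =>
      intro _ D hD
      have := two_mul_e2 c D
      rw [H D hD] at this
      linear_combination -this
    | succ q hpq ih =>
      intro hq1 D hD
      have hq2 : q ≤ n := by omega
      have key : ∀ a ∈ D, ((∑ i ∈ D, c i) - c a)^2 = (∑ i ∈ D, (c i)^2) - (c a)^2 := by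
        intro a ha
        have h1 := ih hq2 (D.erase a) (by rw [Finset.card_erase_of_mem ha, hD]; omega)
        rw [Finset.sum_erase_eq_sub ha, Finset.sum_erase_eq_sub ha] at h1
        exact h1
      set S := ∑ i ∈ D, c i with hS
      set Q := ∑ i ∈ D, (c i)^2 with hQ
      have hsum : ∑ a ∈ D, ((S - c a)^2) = ∑ a ∈ D, (Q - (c a)^2) :=
        Finset.sum_congr rfl key
      have hL : ∑ a ∈ D, ((S - c a)^2) = (q+1 : ℂ) * S^2 - 2*S*S + Q := by
        have : ∀ a ∈ D, (S - c a)^2 = S^2 - 2*S*(c a) + (c a)^2 := fun a _ => by ring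
        rw [Finset.sum_congr rfl this, Finset.sum_add_distrib, Finset.sum_sub_distrib,
          Finset.sum_const, ← Finset.mul_sum, ← hS, ← hQ, hD]
        push_cast
        ring
      have hR : ∑ a ∈ D, (Q - (c a)^2) = (q+1 : ℂ) * Q - Q := by
        rw [Finset.sum_sub_distrib, Finset.sum_const, ← hQ, hD]
        push_cast
        ring
      rw [hL, hR] at hsum
      have hq0 : (q : ℂ) - 1 ≠ 0 := by
        intro h
        have h1 : (q:ℂ) = 1 := by linear_combination h
        have h2 : q = 1 := by exact_mod_cast h1
        omega
      have : ((q:ℂ) - 1) * S^2 = ((q:ℂ) - 1) * Q := by linear_combination hsum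
      exact mul_left_cancel₀ hq0 this
  set S := ∑ i : Fin n, c i with hS
  set Q := ∑ i : Fin n, (c i)^2 with hQ
  have hPn : S^2 = Q :=
    P n (by omega) le_rfl Finset.univ (by simp)
  have hca : ∀ a : Fin n, c a * (c a - S) = 0 := by
    intro a
    have h1 := P (n-1) (by omega) (by omega) (Finset.univ.erase a)
      (by rw [Finset.card_erase_of_mem (Finset.mem_univ a)]; simp)
    rw [Finset.sum_erase_eq_sub (Finset.mem_univ a),
      Finset.sum_erase_eq_sub (Finset.mem_univ a)] at h1
    linear_combination (h1 - hPn)/2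
  intro a b hab
  by_cases hS0 : S = 0
  · have hz : ∀ x, c x = 0 := by
      intro x
      have := hca x
      rw [hS0, sub_zero, ← pow_two] at this
      exact pow_eq_zero_iff (by norm_num) |>.1 this
    rw [hz a, zero_mul]
  · by_contra hcc
    obtain ⟨hA, hB⟩ := mul_ne_zero_iff.1 hcc
    have hval : ∀ x, c x ≠ 0 → c x = S := by
      intro x hx
      rcases mul_eq_zero.1 (hca x) with h | h
      · exact absurd h hx
      · exact sub_eq_zero.1 h
    set N := Finset.univ.filter (fun x => c x ≠ 0) with hN
    have hsum2 : (N.card : ℂ) * S = S := by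
      calc (N.card : ℂ) * S = ∑ _x ∈ N, S := by rw [Finset.sum_const, nsmul_eq_mul]
        _ = ∑ x ∈ N, c x :=
            (Finset.sum_congr rfl fun x hx => (hval x (Finset.mem_filter.1 hx).2).symm)
        _ = ∑ x : Fin n, c x := Finset.sum_filter_ne_zero Finset.univ
        _ = S := hS.symm
    have hc1 : (N.card : ℂ) = 1 := by
      have := mul_right_cancel₀ hS0 (by rw [hsum2, one_mul] : (N.card : ℂ) * S = 1 * S)
      exact this
    have hc2 : N.card = 1 := by exact_mod_cast hc1
    have : 1 < N.card := Finset.one_lt_card.2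
      ⟨a, Finset.mem_filter.2 ⟨Finset.mem_univ a, hA⟩,
       b, Finset.mem_filter.2 ⟨Finset.mem_univ b, hB⟩, hab⟩
    omega

end StabAux
-- chunk 4: matrix helpers, pair equations, monomial structure
section Chunk4
open Finset Polynomial
variable {n : ℕ}
namespace StabAux

lemma mulVec_surj (g : Matrix (Fin n) (Fin n) ℂ) (hg : IsUnit g) :
    Function.Surjective g.mulVec := by
  have hdet : IsUnit g.det := (Matrix.isUnit_iff_isUnit_det g).1 hg
  intro y
  exact ⟨g⁻¹.mulVec y, by rw [Matrix.mulVec_mulVec, Matrix.mul_nonsing_inv g hdet,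
    Matrix.one_mulVec]⟩

lemma mulVec_inj (g : Matrix (Fin n) (Fin n) ℂ) (hg : IsUnit g) :
    Function.Injective g.mulVec := by
  have hdet : IsUnit g.det := (Matrix.isUnit_iff_isUnit_det g).1 hg
  intro x y hxy
  have h2 := congrArg (g⁻¹.mulVec) hxy
  rwa [Matrix.mulVec_mulVec, Matrix.mulVec_mulVec, Matrix.nonsing_inv_mul g hdet,
    Matrix.one_mulVec, Matrix.one_mulVec] at h2

lemma pair_eqs (k : ℕ) (g : Matrix (Fin n) (Fin n) ℂ) (hg : IsUnit g) (lam : ℂ)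
    (h : ∀ x, esymm n k (g.mulVec x) = lam * esymm n k x) (j : Fin n) (y : Fin n → ℂ) :
    ∑ T ∈ Finset.powersetCard k (Finset.univ : Finset (Fin n)),
      ∑ U ∈ Finset.powersetCard 2 T, (∏ i ∈ U, g i j) * ∏ i ∈ T \ U, y i = 0 := by
  obtain ⟨x, rfl⟩ := mulVec_surj g hg y
  have hpoly : expPoly n k (g.mulVec x) (fun a => g a j)
      = Polynomial.C lam * expPoly n k x (Pi.single j 1) := by
    apply Polynomial.funext
    intro t
    rw [Polynomial.eval_mul, Polynomial.eval_C, expPoly_eval, expPoly_eval]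
    have harg : (fun i => g.mulVec x i + t * (fun a => g a j) i)
        = g.mulVec (fun a => x a + t * ((Pi.single j 1 : Fin n → ℂ) a)) := by
      have h0 : (fun a => x a + t * ((Pi.single j 1 : Fin n → ℂ) a)) = x + t • (Pi.single j 1 : Fin n → ℂ) := by
        funext a; simp [Pi.smul_apply, smul_eq_mul]
      rw [h0, Matrix.mulVec_add, Matrix.mulVec_smul, Matrix.mulVec_single]
      funext i
      simp [smul_eq_mul, mul_comm]
    rw [harg, h]
  have hco := congrArg (fun p => Polynomial.coeff p 2) hpoly
  simp only [Polynomial.coeff_C_mul] at hco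
  rw [expPoly_coeff, expPoly_coeff] at hco
  have hz : ∑ T ∈ Finset.powersetCard k (Finset.univ : Finset (Fin n)),
      ∑ U ∈ Finset.powersetCard 2 T, (∏ i ∈ U, (Pi.single j 1 : Fin n → ℂ) i)
        * ∏ i ∈ T \ U, x i = 0 := by
    refine Finset.sum_eq_zero fun T _ => Finset.sum_eq_zero fun U hU => ?_
    have hUc : U.card = 2 := (Finset.mem_powersetCard.1 hU).2
    obtain ⟨a, b, hab, rfl⟩ := Finset.card_eq_two.1 hUc
    have : ∃ i ∈ ({a, b} : Finset (Fin n)), i ≠ j := by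
      by_cases haj : a = j
      · exact ⟨b, by simp, fun hbj => hab (by rw [haj, hbj])⟩
      · exact ⟨a, by simp, haj⟩
    obtain ⟨i, hiU, hij⟩ := this
    rw [Finset.prod_eq_zero hiU (by simp [Pi.single_eq_of_ne hij]), zero_mul]
  rw [hz, mul_zero] at hco
  exact hco

lemma monomial_structure (g : Matrix (Fin n) (Fin n) ℂ) (hg : IsUnit g)
    (hcol : ∀ (j : Fin n) a b, a ≠ b → g a j * g b j = 0) :
    ∃ (ρ : Equiv.Perm (Fin n)) (d : Fin n → ℂ), (∀ i, d i ≠ 0) ∧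
      ∀ (x : Fin n → ℂ) (i : Fin n), g.mulVec x i = d i * x (ρ i) := by
  classical
  have hinj := mulVec_inj g hg
  have hcolnz : ∀ j : Fin n, ∃ a, g a j ≠ 0 := by
    intro j
    by_contra hz
    push_neg at hz
    have h1 : g.mulVec (Pi.single j 1) = g.mulVec 0 := by
      rw [Matrix.mulVec_zero, Matrix.mulVec_single]
      funext i; simp [hz i]
    have := congrFun (hinj h1) j
    simp at this
  choose r hr using hcolnz
  have hzero : ∀ (j : Fin n) a, a ≠ r j → g a j = 0 := by
    intro j a ha
    rcases mul_eq_zero.1 (hcol j a (r j) ha) with h | h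
    · exact h
    · exact absurd h (hr j)
  have hrinj : Function.Injective r := by
    intro j j' hjj
    by_contra hne
    have hx : g.mulVec (Pi.single j (g (r j) j') - Pi.single j' (g (r j) j)) = g.mulVec 0 := by
      rw [Matrix.mulVec_zero, Matrix.mulVec_sub, Matrix.mulVec_single, Matrix.mulVec_single]
      funext i
      by_cases hia : i = r j
      · simp only [Pi.sub_apply, Pi.zero_apply, hia]
        simp
        ring
      · have h1 : g i j = 0 := hzero j i hia
        have h2 : g i j' = 0 := hzero j' i (by rw [← hjj]; exact hia)
        simp [Pi.sub_apply, h1, h2]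
    have h3 := congrFun (hinj hx) j
    rw [Pi.sub_apply, Pi.single_eq_same, Pi.single_eq_of_ne hne] at h3
    simp only [Pi.zero_apply, sub_zero] at h3
    rw [hjj] at h3
    exact hr j' h3
  have hrbij : Function.Bijective r := ⟨hrinj, Finite.surjective_of_injective hrinj⟩
  set σ : Equiv.Perm (Fin n) := Equiv.ofBijective r hrbij with hσ
  refine ⟨σ.symm, fun i => g i (σ.symm i), fun i => ?_, fun x i => ?_⟩
  · show g i (σ.symm i) ≠ 0
    have h4 : r (σ.symm i) = i := σ.apply_symm_apply i
    have h5 := hr (σ.symm i)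
    rw [h4] at h5
    exact h5
  · show (Finset.univ.sum fun j => g i j * x j) = _
    rw [Finset.sum_eq_single (σ.symm i)]
    · intro b _ hb
      have : i ≠ r b := by
        intro hib
        exact hb (by rw [show b = σ.symm (r b) from (σ.symm_apply_apply b).symm, ← hib])
      rw [hzero b i this, zero_mul]
    · intro habs
      exact absurd (Finset.mem_univ _) habs

end StabAux
end Chunk4
-- chunk 5: main classification lemma
section Chunk5
open Finset Polynomial
variable {n : ℕ}
namespace StabAux

lemma ML (k : ℕ) (hk3 : 3 ≤ k) (hkn : k + 1 ≤ n)
    (g : Matrix (Fin n) (Fin n) ℂ) (hg : IsUnit g) (lam : ℂ)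
    (h : ∀ x, esymm n k (g.mulVec x) = lam * esymm n k x) :
    ∃ μ : ℂ, μ ^ k = lam ∧ ∀ (m : ℕ) (x : Fin n → ℂ),
      esymm n m (g.mulVec x) = μ ^ m * esymm n m x := by
  classical
  have hcol : ∀ (j : Fin n) a b, a ≠ b → g a j * g b j = 0 := by
    intro j
    refine lemL (fun a => g a j) (n - k + 2) (by omega) (by omega) ?_
    intro D hD
    have hC : Dᶜ.card + 2 = k := by
      rw [Finset.card_compl, hD]
      simp only [Fintype.card_fin]
      omega
    have hpair := pair_eqs k g hg lam h j (ind Dᶜ)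
    rw [dsum_ind k (fun a => g a j) Dᶜ hC] at hpair
    rwa [compl_compl] at hpair
  obtain ⟨ρ, d, hdnz, hform⟩ := monomial_structure g hg hcol
  have hexp : ∀ (m : ℕ) (x : Fin n → ℂ), esymm n m (g.mulVec x)
      = ∑ T ∈ Finset.powersetCard m Finset.univ, (∏ i ∈ T, d i) * ∏ i ∈ T, x (ρ i) := by
    intro m x
    unfold esymm
    refine Finset.sum_congr rfl fun T _ => ?_
    rw [← Finset.prod_mul_distrib]
    exact Finset.prod_congr rfl fun i _ => hform x i
  have hprod : ∀ W : Finset (Fin n), W.card = k → ∏ i ∈ W, d i = lam := by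
    intro W hW
    have hUc : (W.image ρ).card = k := by
      rw [Finset.card_image_of_injective _ ρ.injective, hW]
    have h1 := h (ind (W.image ρ))
    rw [hexp k (ind (W.image ρ)), esymm_ind, hUc, Nat.choose_self] at h1
    have hsingle : ∑ T ∈ Finset.powersetCard k (Finset.univ : Finset (Fin n)),
        (∏ i ∈ T, d i) * ∏ i ∈ T, ind (W.image ρ) (ρ i) = ∏ i ∈ W, d i := by
      rw [Finset.sum_eq_single W]
      · have h2 : ∀ i ∈ W, ind (W.image ρ) (ρ i) = 1 := fun i hi => by
          simp [ind, Finset.mem_image.2 ⟨i, hi, rfl⟩]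
        rw [Finset.prod_congr rfl h2, Finset.prod_const_one, mul_one]
      · intro T hT hTW
        have hTc : T.card = k := (Finset.mem_powersetCard.1 hT).2
        have hns : ¬ (T.image ρ ⊆ W.image ρ) := by
          intro hsub
          have h3 : T.image ρ = W.image ρ := Finset.eq_of_subset_of_card_le hsub
            (by rw [hUc, Finset.card_image_of_injective _ ρ.injective, hTc])
          exact hTW (Finset.image_injective ρ.injective h3)
        obtain ⟨y, hyT, hyU⟩ := Finset.not_subset.1 hns
        obtain ⟨i, hiT, rfl⟩ := Finset.mem_image.1 hyT
        have hz0 : ∏ i ∈ T, ind (W.image ρ) (ρ i) = 0 :=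
          Finset.prod_eq_zero hiT (by simp [ind, hyU])
        rw [hz0, mul_zero]
      · intro hW'
        exact absurd (Finset.mem_powersetCard.2 ⟨Finset.subset_univ _, hW⟩) hW'
    rw [hsingle] at h1
    rw [h1]
    simp
  have hn0 : 0 < n := by omega
  set μ := d ⟨0, hn0⟩ with hμ
  have hconst : ∀ i, d i = μ := by
    intro i
    by_cases hi : i = ⟨0, hn0⟩
    · rw [hi]
    · have hcard : k - 1 ≤ (Finset.univ \ {i, ⟨0, hn0⟩} : Finset (Fin n)).card := by
        rw [Finset.card_sdiff_of_subset (Finset.subset_univ _)]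
        have : ({i, ⟨0, hn0⟩} : Finset (Fin n)).card = 2 :=
          Finset.card_pair hi
        rw [this]
        simp only [Finset.card_univ, Fintype.card_fin]
        omega
      obtain ⟨A, hA, hAc⟩ := Finset.exists_subset_card_eq hcard
      have hiA : i ∉ A := fun hmem => by
        have := hA hmem
        simp at this
      have h0A : (⟨0, hn0⟩ : Fin n) ∉ A := fun hmem => by
        have := hA hmem
        simp at this
      have hW1 := hprod (insert i A) (by rw [Finset.card_insert_of_notMem hiA, hAc]; omega)
      have hW2 := hprod (insert (⟨0, hn0⟩ : Fin n) A)
        (by rw [Finset.card_insert_of_notMem h0A, hAc]; omega)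
      rw [Finset.prod_insert hiA] at hW1
      rw [Finset.prod_insert h0A] at hW2
      have hAnz : ∏ j ∈ A, d j ≠ 0 := Finset.prod_ne_zero_iff.2 fun j _ => hdnz j
      have := hW1.trans hW2.symm
      exact mul_right_cancel₀ hAnz this
  have hμk : μ ^ k = lam := by
    have hcard : k ≤ (Finset.univ : Finset (Fin n)).card := by
      simp only [Finset.card_univ, Fintype.card_fin]; omega
    obtain ⟨W, -, hWc⟩ := Finset.exists_subset_card_eq hcard
    have h4 := hprod W hWc
    rw [Finset.prod_congr rfl (fun i _ => hconst i), Finset.prod_const, hWc] at h4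
    exact h4
  refine ⟨μ, hμk, fun m x => ?_⟩
  rw [hexp m x]
  have h5 : ∀ T ∈ Finset.powersetCard m (Finset.univ : Finset (Fin n)),
      (∏ i ∈ T, d i) * ∏ i ∈ T, x (ρ i) = μ ^ m * ∏ i ∈ T, x (ρ i) := by
    intro T hT
    rw [Finset.prod_congr rfl (fun i (_ : i ∈ T) => hconst i), Finset.prod_const,
      (Finset.mem_powersetCard.1 hT).2]
  rw [Finset.sum_congr rfl h5, ← Finset.mul_sum]
  congr 1
  unfold esymm
  refine Finset.sum_nbij' (fun T => T.image ρ) (fun T => T.image ρ.symm) ?_ ?_ ?_ ?_ ?_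
  · intro T hT
    rw [Finset.mem_powersetCard] at hT ⊢
    exact ⟨Finset.subset_univ _, by rw [Finset.card_image_of_injective _ ρ.injective, hT.2]⟩
  · intro T hT
    rw [Finset.mem_powersetCard] at hT ⊢
    exact ⟨Finset.subset_univ _, by rw [Finset.card_image_of_injective _ ρ.symm.injective, hT.2]⟩
  · intro T _
    simp [Finset.image_image]
  · intro T _
    simp [Finset.image_image]
  · intro T _
    exact (Finset.prod_image fun i _ j _ hij => ρ.injective hij).symm

end StabAux
end Chunk5
-- chunk 6: hyperplane non-vanishing
section Chunk6
open Finset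
variable {n : ℕ}
namespace StabAux

lemma point_calc (k : ℕ) (i : Fin n) (S : Finset (Fin n)) (hiS : i ∉ S) (hS : S.card = k)
    (t : ℂ) (a : Fin n → ℂ) :
    (∑ j, a j * (fun m => if m ∈ S then (1:ℂ) else if m = i then t else 0) j)
        = (∑ s ∈ S, a s) + a i * t ∧
    esymm n k (fun m => if m ∈ S then (1:ℂ) else if m = i then t else 0) = 1 + k * t := by
  classical
  set x : Fin n → ℂ := fun m => if m ∈ S then (1:ℂ) else if m = i then t else 0 with hx
  have hxi : x i = t := by simp [hx, hiS]
  have hxS : ∀ m ∈ S, x m = 1 := fun m hm => by simp [hx, hm]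
  have hxout : ∀ m, m ∉ insert i S → x m = 0 := by
    intro m hm
    simp only [Finset.mem_insert, not_or] at hm
    simp [hx, hm.1, hm.2]
  constructor
  · have h1 : ∑ j, a j * x j = ∑ j ∈ insert i S, a j * x j := by
      refine (Finset.sum_subset (Finset.subset_univ _) ?_).symm
      intro m _ hm
      rw [hxout m hm, mul_zero]
    rw [h1, Finset.sum_insert hiS, hxi]
    rw [Finset.sum_congr rfl fun s hs => by rw [hxS s hs, mul_one]]
    ring
  · unfold esymm
    have h1 : ∑ T ∈ Finset.powersetCard k (Finset.univ : Finset (Fin n)), ∏ m ∈ T, x m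
        = ∑ T ∈ Finset.powersetCard k (insert i S), ∏ m ∈ T, x m := by
      refine (Finset.sum_subset (Finset.powersetCard_mono (Finset.subset_univ _)) ?_).symm
      intro T hT hT2
      have : ¬ T ⊆ insert i S := by
        intro hsub
        exact hT2 (Finset.mem_powersetCard.2 ⟨hsub, (Finset.mem_powersetCard.1 hT).2⟩)
      obtain ⟨m, hmT, hm⟩ := Finset.not_subset.1 this
      exact Finset.prod_eq_zero hmT (hxout m hm)
    have h2 : ∀ T ∈ Finset.powersetCard k (insert i S), ∏ m ∈ T, x m
        = if i ∈ T then t else 1 := by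
      intro T hT
      obtain ⟨hTsub, hTc⟩ := Finset.mem_powersetCard.1 hT
      by_cases hiT : i ∈ T
      · rw [if_pos hiT, ← Finset.mul_prod_erase T x hiT, hxi]
        have : ∀ m ∈ T.erase i, x m = 1 := by
          intro m hm
          have hmi : m ≠ i := Finset.ne_of_mem_erase hm
          have : m ∈ S := by
            rcases Finset.mem_insert.1 (hTsub (Finset.mem_of_mem_erase hm)) with h | h
            · exact absurd h hmi
            · exact h
          exact hxS m this
        rw [Finset.prod_congr rfl this, Finset.prod_const_one, mul_one]
      · rw [if_neg hiT]
        refine Finset.prod_eq_one fun m hm => ?_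
        have : m ∈ S := by
          rcases Finset.mem_insert.1 (hTsub hm) with h | h
          · exact absurd (h ▸ hm) hiT
          · exact h
        exact hxS m this
    rw [h1, Finset.sum_congr rfl h2, Finset.sum_ite, Finset.sum_const, Finset.sum_const]
    have hco : (Finset.powersetCard k (insert i S)).card = k + 1 := by
      rw [Finset.card_powersetCard, Finset.card_insert_of_notMem hiS, hS,
        Nat.choose_succ_self_right]
    have hfilneg : (Finset.powersetCard k (insert i S)).filter (fun T => i ∉ T) = {S} := by
      ext T
      simp only [Finset.mem_filter, Finset.mem_powersetCard, Finset.mem_singleton]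
      constructor
      · rintro ⟨⟨hsub, hc⟩, hiT⟩
        have hTS : T ⊆ S := fun m hm => by
          rcases Finset.mem_insert.1 (hsub hm) with h | h
          · exact absurd (h ▸ hm) hiT
          · exact h
        exact Finset.eq_of_subset_of_card_le hTS (by omega)
      · rintro rfl
        exact ⟨⟨Finset.subset_insert _ _, hS⟩, hiS⟩
    have hfilpos : ((Finset.powersetCard k (insert i S)).filter (fun T => i ∈ T)).card = k := by
      have := Finset.card_filter_add_card_filter_not
        (s := Finset.powersetCard k (insert i S)) (p := fun T => i ∈ T)
      rw [hco] at this
      have h9 : ((Finset.powersetCard k (insert i S)).filter (fun T => ¬ i ∈ T)).card = 1 := by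
        rw [show (Finset.powersetCard k (insert i S)).filter (fun T => ¬ i ∈ T) = {S} from hfilneg]
        simp
      omega
    rw [hfilpos, hfilneg]
    simp only [Finset.card_singleton, nsmul_eq_mul, Nat.cast_one, one_mul, mul_one, smul_eq_mul]
    ring
end StabAux
end Chunk6
-- chunk 6b : nlf
section Chunk6b
open Finset
variable {n : ℕ}
namespace StabAux

lemma nlf (k : ℕ) (hk2 : 2 ≤ k) (hkn : k + 2 ≤ n) (a : Fin n → ℂ) (i0 : Fin n)
    (ha : a i0 ≠ 0) :
    ∃ x : Fin n → ℂ, (∑ j, a j * x j) = 0 ∧ esymm n k x ≠ 0 := by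
  classical
  have hk0 : (k:ℂ) ≠ 0 := Nat.cast_ne_zero.2 (by omega)
  by_cases hcase : ∃ S : Finset (Fin n), i0 ∉ S ∧ S.card = k ∧ (k:ℂ) * (∑ s ∈ S, a s) ≠ a i0
  · obtain ⟨S, hiS, hSc, hne⟩ := hcase
    set t : ℂ := -(∑ s ∈ S, a s) / a i0 with ht
    obtain ⟨hsum, hes⟩ := point_calc k i0 S hiS hSc t a
    refine ⟨(fun m => if m ∈ S then (1:ℂ) else if m = i0 then t else 0), ?_, ?_⟩
    · rw [hsum, ht]
      field_simp
      ring
    · rw [hes]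
      intro habs
      apply hne
      have h2 : a i0 * (1 + (k:ℂ) * t) = 0 := by rw [habs, mul_zero]
      rw [ht] at h2
      field_simp at h2
      linear_combination -h2
  · push_neg at hcase
    have hall : ∀ s s' : Fin n, s ≠ i0 → s' ≠ i0 → a s = a s' := by
      intro s s' hs hs'
      by_cases hss : s = s'
      · rw [hss]
      · have hc3 : ({i0, s, s'} : Finset (Fin n)).card ≤ 3 := by
          refine (Finset.card_insert_le _ _).trans ?_
          have := Finset.card_insert_le s ({s'} : Finset (Fin n))
          simp only [Finset.card_singleton] at this
          omega
        have hcard : k - 1 ≤ (Finset.univ \ {i0, s, s'} : Finset (Fin n)).card := by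
          rw [Finset.card_sdiff_of_subset (Finset.subset_univ _)]
          simp only [Finset.card_univ, Fintype.card_fin]
          omega
        obtain ⟨A, hA, hAc⟩ := Finset.exists_subset_card_eq hcard
        have hnm : ∀ m ∈ A, m ≠ i0 ∧ m ≠ s ∧ m ≠ s' := by
          intro m hm
          have := hA hm
          simp only [Finset.mem_sdiff, Finset.mem_insert, Finset.mem_singleton, not_or] at this
          exact this.2
        have hsA : s ∉ A := fun hm => (hnm s hm).2.1 rfl
        have hs'A : s' ∉ A := fun hm => (hnm s' hm).2.2 rfl
        have hi0S1 : i0 ∉ insert s A := by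
          simp only [Finset.mem_insert, not_or]
          exact ⟨fun h => hs h.symm, fun hm => (hnm i0 hm).1 rfl⟩
        have hi0S2 : i0 ∉ insert s' A := by
          simp only [Finset.mem_insert, not_or]
          exact ⟨fun h => hs' h.symm, fun hm => (hnm i0 hm).1 rfl⟩
        have hc1 := hcase (insert s A) hi0S1
          (by rw [Finset.card_insert_of_notMem hsA, hAc]; omega)
        have hc2 := hcase (insert s' A) hi0S2
          (by rw [Finset.card_insert_of_notMem hs'A, hAc]; omega)
        rw [Finset.sum_insert hsA] at hc1
        rw [Finset.sum_insert hs'A] at hc2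
        have := hc1.trans hc2.symm
        have h5 := mul_left_cancel₀ hk0 this
        linear_combination h5
    obtain ⟨j0, hj0⟩ : ∃ j0 : Fin n, j0 ≠ i0 :=
      Fintype.exists_ne_of_one_lt_card (by simp; omega) i0
    have hcard2 : k ≤ (Finset.univ \ {i0, j0} : Finset (Fin n)).card := by
      rw [Finset.card_sdiff_of_subset (Finset.subset_univ _)]
      have : ({i0, j0} : Finset (Fin n)).card ≤ 2 := Finset.card_insert_le _ _ |>.trans (by simp)
      simp only [Finset.card_univ, Fintype.card_fin]
      omega
    obtain ⟨S', hS', hS'c⟩ := Finset.exists_subset_card_eq hcard2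
    have hmem : ∀ m ∈ S', m ≠ i0 ∧ m ≠ j0 := by
      intro m hm
      have := hS' hm
      simp only [Finset.mem_sdiff, Finset.mem_insert, Finset.mem_singleton, not_or] at this
      exact this.2
    have hi0S' : i0 ∉ S' := fun hm => (hmem i0 hm).1 rfl
    have hj0S' : j0 ∉ S' := fun hm => (hmem j0 hm).2 rfl
    have hsumS' : ∑ s ∈ S', a s = (k:ℂ) * a j0 := by
      rw [Finset.sum_congr rfl fun s hscond => hall s j0 (hmem s hscond).1 hj0]
      rw [Finset.sum_const, hS'c, nsmul_eq_mul]
    obtain ⟨hsum, hes⟩ := point_calc k j0 S' hj0S' hS'c (-(k:ℂ)) a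
    refine ⟨(fun m => if m ∈ S' then (1:ℂ) else if m = j0 then -(k:ℂ) else 0), ?_, ?_⟩
    · rw [hsum, hsumS']
      ring
    · rw [hes]
      intro habs
      have h6 : (k:ℂ)^2 = 1 := by linear_combination -habs
      have h7 : ((k^2 : ℕ) : ℂ) = ((1:ℕ) : ℂ) := by push_cast; linear_combination h6
      have h8 : k^2 = 1 := Nat.cast_injective h7
      have : k = 1 := by nlinarith [h8]
      omega
end StabAux
end Chunk6b
-- chunk 7a : final helpers
section Chunk7a
open Finset Polynomial
variable {n : ℕ}
namespace StabAux

lemma poly_zero_of_cofinite (p : Polynomial ℂ) (t0 : ℂ) (h : ∀ t, t ≠ t0 → p.eval t = 0) :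
    p = 0 := by
  refine Polynomial.eq_zero_of_infinite_isRoot p ?_
  refine Set.Infinite.mono ?_ ((Set.finite_singleton t0).infinite_compl)
  intro t ht
  simp only [Set.mem_compl_iff, Set.mem_singleton_iff] at ht
  exact h t ht

lemma mulVec_comb (g : Matrix (Fin n) (Fin n) ℂ) (u v : Fin n → ℂ) (s : ℂ) :
    g.mulVec (fun m => u m + s * v m) = fun i => g.mulVec u i + s * g.mulVec v i := by
  have h0 : (fun m => u m + s * v m) = u + s • v := by
    funext m; simp
  rw [h0, Matrix.mulVec_add, Matrix.mulVec_smul]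
  funext i
  simp

lemma esymm_one_lin (u v : Fin n → ℂ) (s : ℂ) :
    esymm n 1 (fun m => u m + s * v m) = esymm n 1 u + s * esymm n 1 v := by
  rw [esymm_one_eq, esymm_one_eq, esymm_one_eq, Finset.sum_add_distrib, Finset.mul_sum]

lemma const_one_eq_ind : (fun _ : Fin n => (1:ℂ)) = ind (Finset.univ) := by
  funext m; simp [ind]

lemma esymm_const_one (m : ℕ) : esymm n m (fun _ => (1:ℂ)) = (n.choose m : ℂ) := by
  rw [const_one_eq_ind, esymm_ind]
  simp

end StabAux
end Chunk7a

/-- Let `3 < r < n` and `P = e₁ · e_{r-1}`, a homogeneous polynomial of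
degree `r`. Then `g ∈ GLₙ(ℂ)` preserves `P` if and only if it preserves `e_r`; i.e. the
stabilizer of `e₁ · e_{r-1}` equals the stabilizer of `e_r`. In particular (since
`e₁ · e_{r-1} ≠ e_r`), `e_r` is not the only homogeneous degree-`r` polynomial with this
stabilizer. -/
theorem stabilizer_of_product (n r : ℕ) (hr : 3 < r) (hrn : r < n) :
    (∀ g : Matrix (Fin n) (Fin n) ℂ, IsUnit g →
      ((∀ x : Fin n → ℂ,
          esymm n 1 (g.mulVec x) * esymm n (r - 1) (g.mulVec x) =
            esymm n 1 x * esymm n (r - 1) x) ↔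
        (∀ x : Fin n → ℂ, esymm n r (g.mulVec x) = esymm n r x))) ∧
    (fun x : Fin n → ℂ => esymm n 1 x * esymm n (r - 1) x) ≠ esymm n r := by
  have hnC : (n:ℂ) ≠ 0 := Nat.cast_ne_zero.2 (by omega)
  have hprodne : esymm n 1 (fun _ : Fin n => (1:ℂ)) * esymm n (r-1) (fun _ => (1:ℂ)) ≠ 0 := by
    rw [StabAux.esymm_const_one, StabAux.esymm_const_one, Nat.choose_one_right]
    exact mul_ne_zero hnC (Nat.cast_ne_zero.2 (Nat.choose_pos (by omega)).ne')
  constructor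
  · intro g hg
    constructor
    · -- A → B
      intro hA
      have hV : ∀ v : Fin n → ℂ, esymm n 1 v = 0 → esymm n 1 (g.mulVec v) = 0 := by
        by_contra hcon
        push_neg at hcon
        obtain ⟨w, hw1, hw2⟩ := hcon
        have hQV : ∀ v, esymm n 1 v = 0 → esymm n (r-1) (g.mulVec v) = 0 := by
          intro v hv
          have hroots : ∀ t : ℂ,
              t ≠ -(esymm n 1 (g.mulVec v)) / (esymm n 1 (g.mulVec w)) →
              (StabAux.expPoly n (r-1) (g.mulVec v) (g.mulVec w)).eval t = 0 := by
            intro t ht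
            rw [StabAux.expPoly_eval]
            have harg : (fun i => g.mulVec v i + t * g.mulVec w i)
                = g.mulVec (fun m => v m + t * w m) := (StabAux.mulVec_comb g v w t).symm
            have hA' := hA (fun m => v m + t * w m)
            have he10 : esymm n 1 (fun m => v m + t * w m) = 0 := by
              rw [StabAux.esymm_one_lin, hv, hw1, mul_zero, add_zero]
            rw [he10, zero_mul, ← harg] at hA'
            have hlnz : esymm n 1 (fun i => g.mulVec v i + t * g.mulVec w i) ≠ 0 := by
              rw [StabAux.esymm_one_lin]
              intro h0
              apply ht
              field_simp
              linear_combination h0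
            exact (mul_eq_zero.1 hA').resolve_left hlnz
          have hp0 := StabAux.poly_zero_of_cofinite _ _ hroots
          have he := StabAux.expPoly_eval (n := n) (r-1) (g.mulVec v) (g.mulVec w) 0
          rw [hp0] at he
          simp only [Polynomial.eval_zero] at he
          have hid0 : (fun i => g.mulVec v i + 0 * g.mulVec w i) = g.mulVec v := by
            funext i; simp
          rw [hid0] at he
          exact he.symm
        have hdet : IsUnit g.det := (Matrix.isUnit_iff_isUnit_det g).1 hg
        have hgB : ∀ y, g.mulVec (g⁻¹.mulVec y) = y := fun y => by
          rw [Matrix.mulVec_mulVec, Matrix.mul_nonsing_inv g hdet, Matrix.one_mulVec]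
        have hBg : ∀ y, g⁻¹.mulVec (g.mulVec y) = y := fun y => by
          rw [Matrix.mulVec_mulVec, Matrix.nonsing_inv_mul g hdet, Matrix.one_mulVec]
        have haY : ∀ y : Fin n → ℂ,
            (∑ j, (∑ i, g⁻¹ i j) * y j) = esymm n 1 (g⁻¹.mulVec y) := by
          intro y
          rw [StabAux.esymm_one_eq]
          have hmv : ∀ i, g⁻¹.mulVec y i = ∑ j, g⁻¹ i j * y j := fun i => rfl
          rw [Finset.sum_congr rfl fun i _ => hmv i, Finset.sum_comm]
          exact Finset.sum_congr rfl fun j _ => Finset.sum_mul _ _ _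
        have hexists : ∃ i0, (∑ i, g⁻¹ i i0) ≠ 0 := by
          by_contra hz
          push_neg at hz
          have h1 := haY (g.mulVec (fun _ => 1))
          rw [hBg] at h1
          have h2 : (∑ j, (∑ i, g⁻¹ i j) * (g.mulVec (fun _ => (1:ℂ))) j) = 0 :=
            Finset.sum_eq_zero fun j _ => by rw [hz j, zero_mul]
          rw [h2, StabAux.esymm_const_one 1, Nat.choose_one_right] at h1
          exact hnC h1.symm
        obtain ⟨i0, hi0⟩ := hexists
        obtain ⟨x0, hx0a, hx0e⟩ := StabAux.nlf (r-1) (by omega) (by omega) (fun j => ∑ i, g⁻¹ i j) i0 hi0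
        apply hx0e
        have h3 := hQV (g⁻¹.mulVec x0) (by rw [← haY x0]; exact hx0a)
        rw [hgB] at h3
        exact h3
      set c := esymm n 1 (g.mulVec (fun _ => 1)) / n with hc
      have hl_eq : ∀ x, esymm n 1 (g.mulVec x) = c * esymm n 1 x := by
        intro x
        set s := esymm n 1 x / n with hs
        have hveq : x = (fun m => (x m - s) + s * (fun _ : Fin n => (1:ℂ)) m) := by
          funext m; show x m = (x m - s) + s * 1; ring
        have hv0 : esymm n 1 (fun m => x m - s) = 0 := by
          have h6 : (fun m => x m - s) = (fun m => x m + (-s) * (fun _ : Fin n => (1:ℂ)) m) := by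
            funext m; show x m - s = x m + (-s) * 1; ring
          rw [h6, StabAux.esymm_one_lin, StabAux.esymm_const_one 1, Nat.choose_one_right, hs]
          field_simp
          ring
        calc esymm n 1 (g.mulVec x)
            = esymm n 1 (g.mulVec (fun m => (x m - s) + s * (fun _ : Fin n => (1:ℂ)) m)) := by
              rw [← hveq]
          _ = esymm n 1 (fun i => g.mulVec (fun m => x m - s) i
                + s * g.mulVec (fun _ => 1) i) := by rw [StabAux.mulVec_comb]
          _ = esymm n 1 (g.mulVec (fun m => x m - s))
                + s * esymm n 1 (g.mulVec (fun _ => 1)) := StabAux.esymm_one_lin _ _ s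
          _ = s * esymm n 1 (g.mulVec (fun _ => 1)) := by rw [hV _ hv0, zero_add]
          _ = c * esymm n 1 x := by rw [hc, hs]; field_simp
      have hc0 : c ≠ 0 := by
        intro h0
        have h1 := hA (fun _ => 1)
        rw [hl_eq, h0, zero_mul, zero_mul] at h1
        exact hprodne h1.symm
      have hQ : ∀ x, esymm n (r-1) (g.mulVec x) = c⁻¹ * esymm n (r-1) x := by
        intro x
        have hroots : ∀ t : ℂ, t ≠ -(esymm n 1 x)/n →
            (Polynomial.C c * StabAux.expPoly n (r-1) (g.mulVec x) (g.mulVec (fun _ => 1))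
              - StabAux.expPoly n (r-1) x (fun _ => 1)).eval t = 0 := by
          intro t ht
          simp only [Polynomial.eval_sub, Polynomial.eval_mul, Polynomial.eval_C]
          rw [StabAux.expPoly_eval, StabAux.expPoly_eval]
          have harg : (fun i => g.mulVec x i + t * g.mulVec (fun _ => (1:ℂ)) i)
              = g.mulVec (fun m => x m + t * (fun _ : Fin n => (1:ℂ)) m) :=
            (StabAux.mulVec_comb g x (fun _ => 1) t).symm
          rw [harg]
          have hA' := hA (fun m => x m + t * (fun _ : Fin n => (1:ℂ)) m)
          rw [hl_eq] at hA'
          have he1 : esymm n 1 (fun m => x m + t * (fun _ : Fin n => (1:ℂ)) m)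
              = esymm n 1 x + t * n := by
            rw [StabAux.esymm_one_lin, StabAux.esymm_const_one 1, Nat.choose_one_right]
          have hne : esymm n 1 (fun m => x m + t * (fun _ : Fin n => (1:ℂ)) m) ≠ 0 := by
            rw [he1]
            intro h0
            apply ht
            field_simp
            linear_combination h0
          have h2 : esymm n 1 (fun m => x m + t * (fun _ : Fin n => (1:ℂ)) m)
              * (c * esymm n (r-1) (g.mulVec (fun m => x m + t * (fun _ : Fin n => (1:ℂ)) m)))
              = esymm n 1 (fun m => x m + t * (fun _ : Fin n => (1:ℂ)) m)
              * esymm n (r-1) (fun m => x m + t * (fun _ : Fin n => (1:ℂ)) m) := by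
            linear_combination hA'
          have h3 := mul_left_cancel₀ hne h2
          linear_combination h3
        have hq0 := StabAux.poly_zero_of_cofinite _ _ hroots
        have hev := congrArg (fun p => Polynomial.eval 0 p) hq0
        simp only [Polynomial.eval_sub, Polynomial.eval_mul, Polynomial.eval_C,
          Polynomial.eval_zero] at hev
        rw [StabAux.expPoly_eval, StabAux.expPoly_eval] at hev
        have h4 : (fun i => g.mulVec x i + 0 * g.mulVec (fun _ => (1:ℂ)) i) = g.mulVec x := by
          funext i; simp
        have h5 : (fun m => x m + 0 * (fun _ : Fin n => (1:ℂ)) m) = x := by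
          funext m; simp
        rw [h4, h5] at hev
        field_simp
        linear_combination hev
      obtain ⟨μ, hμ, hall⟩ := StabAux.ML (r-1) (by omega) (by omega) g hg c⁻¹ hQ
      have h1A := hA (fun _ => 1)
      rw [hall 1, hall (r-1)] at h1A
      have hμr : μ ^ r = 1 := by
        have hsplit : μ ^ r = μ ^ 1 * μ ^ (r-1) := by rw [← pow_add]; congr 1; omega
        have h2 : μ ^ r * (esymm n 1 (fun _ : Fin n => (1:ℂ)) * esymm n (r-1) (fun _ => 1))
            = 1 * (esymm n 1 (fun _ : Fin n => (1:ℂ)) * esymm n (r-1) (fun _ => 1)) := by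
          rw [hsplit, one_mul]
          linear_combination h1A
        exact mul_right_cancel₀ hprodne h2
      intro x
      obtain ⟨μ', hμ', hall'⟩ := StabAux.ML (r-1) (by omega) (by omega) g hg c⁻¹ hQ
      rw [hall r x, hμr, one_mul]
    · -- B → A
      intro hB x
      obtain ⟨μ, hμ, hall⟩ := StabAux.ML r (by omega) (by omega) g hg 1
        (fun x => by rw [hB x, one_mul])
      rw [hall 1 x, hall (r-1) x]
      have hsplit : μ ^ 1 * μ ^ (r-1) = μ ^ r := by rw [← pow_add]; congr 1; omega
      calc μ^1 * esymm n 1 x * (μ^(r-1) * esymm n (r-1) x)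
          = (μ^1 * μ^(r-1)) * (esymm n 1 x * esymm n (r-1) x) := by ring
        _ = esymm n 1 x * esymm n (r-1) x := by rw [hsplit, hμ, one_mul]
  · -- the two polynomials differ
    intro heq
    have h1 := congrFun heq (fun _ => (1:ℂ))
    rw [StabAux.esymm_const_one, StabAux.esymm_const_one, StabAux.esymm_const_one,
      Nat.choose_one_right] at h1
    have h2 : (↑(n * (n.choose (r-1))) : ℂ) = (↑(n.choose r) : ℂ) := by
      push_cast
      linear_combination h1
    have h3 : n * n.choose (r-1) = n.choose r := Nat.cast_injective h2
    have hid : (n.choose r) * r = n.choose (r-1) * (n - (r-1)) := by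
      have h6 := Nat.choose_succ_right_eq n (r-1)
      rw [show r - 1 + 1 = r by omega] at h6
      exact h6
    have hpos : 0 < n.choose (r-1) := Nat.choose_pos (by omega)
    have heq2 : (n.choose (r-1)) * (n * r) = (n.choose (r-1)) * (n - (r-1)) := by
      rw [← hid, ← h3]
      ring
    have heq3 : n * r = n - (r-1) := Nat.eq_of_mul_eq_mul_left hpos heq2
    have h4 : n * 4 ≤ n * r := Nat.mul_le_mul_left n (by omega)
    have h5 : n - (r-1) ≤ n := Nat.sub_le _ _
    omega
end

section
/- Let n and r be integers with 3 < r < n, and suppose g ∈ GL_n(ℂ) satisfies (e_1·e_{r−1})(g·x) = (e_1·e_{r−1})(x) for all x ∈ ℂⁿ. Then there exists α ∈ ℂ, α ≠ 0, such that e_1(g·x) = α·e_1(x) and e_{r−1}(g·x) = α^{−1}·e_{r−1}(x) for all x ∈ ℂⁿ. -/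
open Finset

lemma esymm_eq_eval (n k : ℕ) (x : Fin n → ℂ) :
    esymm n k x = MvPolynomial.eval x (MvPolynomial.esymm (Fin n) ℂ k) := by
  simp [esymm, MvPolynomial.esymm]

lemma esymm_one_apply (n : ℕ) (x : Fin n → ℂ) : esymm n 1 x = ∑ i, x i := by
  rw [esymm_eq_eval, MvPolynomial.esymm_one]
  simp

lemma esymm_ones (n k : ℕ) : esymm n k (fun _ => 1) = (n.choose k : ℂ) := by
  simp [esymm]

lemma eval_bind {n : ℕ} (f : Fin n → MvPolynomial (Fin n) ℂ)
    (p : MvPolynomial (Fin n) ℂ) (x : Fin n → ℂ) :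
    MvPolynomial.eval x (MvPolynomial.bind₁ f p)
      = MvPolynomial.eval (fun i => MvPolynomial.eval x (f i)) p := by
  rw [MvPolynomial.bind₁, MvPolynomial.aeval_def, MvPolynomial.algebraMap_eq]
  exact (MvPolynomial.eval_assoc f x p).symm

/-- Evaluation of `e_{m+1}` at the vector which is `1` on `S`, `t` at `j`, `0` elsewhere. -/
lemma esymm_indicator (n m : ℕ) (j : Fin n) (S : Finset (Fin n)) (hjS : j ∉ S)
    (hcard : S.card = m + 1) (t : ℂ) :
    esymm n (m + 1) (fun i => if i ∈ S then 1 else if i = j then t else 0)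
      = 1 + (m + 1) * t := by
  classical
  set x : Fin n → ℂ := fun i => if i ∈ S then 1 else if i = j then t else 0 with hx
  have hsub : Finset.powersetCard (m+1) (insert j S) ⊆ Finset.powersetCard (m+1) Finset.univ :=
    Finset.powersetCard_mono (Finset.subset_univ _)
  have hzero : ∀ I ∈ Finset.powersetCard (m+1) Finset.univ,
      I ∉ Finset.powersetCard (m+1) (insert j S) → ∏ i ∈ I, x i = 0 := by
    intro I hI hI'
    rw [Finset.mem_powersetCard] at hI hI'
    have : ¬ I ⊆ insert j S := fun h => hI' ⟨h, hI.2⟩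
    obtain ⟨i, hiI, hiT⟩ := Finset.not_subset.mp this
    refine Finset.prod_eq_zero hiI ?_
    simp only [Finset.mem_insert, not_or] at hiT
    simp [hx, hiT.1, hiT.2]
  have hmain : esymm n (m+1) x = ∑ I ∈ Finset.powersetCard (m+1) (insert j S), ∏ i ∈ I, x i := by
    rw [esymm]
    exact (Finset.sum_subset hsub hzero).symm
  rw [hmain, Finset.powersetCard_succ_insert hjS m]
  have hdisj : Disjoint (Finset.powersetCard (m+1) S)
      ((Finset.powersetCard m S).image (insert j)) := by
    rw [Finset.disjoint_left]
    intro I hI hI'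
    rw [Finset.mem_powersetCard] at hI
    obtain ⟨I', hI', rfl⟩ := Finset.mem_image.mp hI'
    exact hjS (hI.1 (Finset.mem_insert_self j I'))
  rw [Finset.sum_union hdisj]
  have h1 : ∑ I ∈ Finset.powersetCard (m+1) S, ∏ i ∈ I, x i = 1 := by
    rw [← hcard, Finset.powersetCard_self, Finset.sum_singleton]
    refine Finset.prod_eq_one ?_
    intro i hi
    simp [hx, hi]
  have h2 : ∑ I ∈ (Finset.powersetCard m S).image (insert j), ∏ i ∈ I, x i
      = (m + 1) * t := by
    rw [Finset.sum_image ?hinj]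
    case hinj =>
      intro A hA B hB hAB
      rw [Finset.mem_coe, Finset.mem_powersetCard] at hA hB
      have hjA : j ∉ A := fun h => hjS (hA.1 h)
      have hjB : j ∉ B := fun h => hjS (hB.1 h)
      have := congrArg (Finset.erase · j) hAB
      simpa [Finset.erase_insert hjA, Finset.erase_insert hjB] using this
    have hterm : ∀ I ∈ Finset.powersetCard m S, ∏ i ∈ insert j I, x i = t := by
      intro I hI
      rw [Finset.mem_powersetCard] at hI
      have hjI : j ∉ I := fun h => hjS (hI.1 h)
      rw [Finset.prod_insert hjI]
      have : ∏ i ∈ I, x i = 1 := Finset.prod_eq_one (fun i hi => by simp [hx, hI.1 hi])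
      rw [this]; simp [hx, hjS]
    rw [Finset.sum_congr rfl hterm, Finset.sum_const, Finset.card_powersetCard, hcard,
      Nat.choose_succ_self_right]
    simp
  rw [h1, h2]

/-- If all `m`-element subsets avoiding `j` have the same `d`-sum, then `d` is constant
away from `j`. -/
lemma eq_of_sum_const {n m : ℕ} (hm : 1 ≤ m) (hn : m + 2 ≤ n) (j : Fin n) (d : Fin n → ℂ)
    (w : ℂ) (h : ∀ S ⊆ Finset.univ.erase j, S.card = m → ∑ i ∈ S, d i = w) :
    ∀ a b : Fin n, a ≠ j → b ≠ j → d a = d b := by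
  classical
  intro a b ha hb
  rcases eq_or_ne a b with rfl | hab
  · rfl
  have hU : (m - 1) ≤ (Finset.univ \ {j, a, b} : Finset (Fin n)).card := by
    have hcard3 : ({j, a, b} : Finset (Fin n)).card ≤ 3 := by
      refine le_trans (Finset.card_insert_le _ _) ?_
      have := Finset.card_insert_le a ({b} : Finset (Fin n))
      simp at this ⊢
      omega
    rw [Finset.card_sdiff_of_subset (Finset.subset_univ _), Finset.card_univ, Fintype.card_fin]
    omega
  obtain ⟨T, hTsub, hTcard⟩ := Finset.exists_subset_card_eq hU
  have hjT : j ∉ T := fun h' => by simpa using hTsub h'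
  have haT : a ∉ T := fun h' => by simpa using hTsub h'
  have hbT : b ∉ T := fun h' => by simpa using hTsub h'
  have hTj : T ⊆ Finset.univ.erase j := fun i hi => by
    have := hTsub hi
    simp only [Finset.mem_sdiff, Finset.mem_insert, Finset.mem_singleton, not_or] at this
    simp [this.2.1]
  have hSa : ∑ i ∈ insert a T, d i = w := by
    refine h _ ?_ ?_
    · intro i hi
      rcases Finset.mem_insert.mp hi with rfl | hi
      · simp [ha]
      · exact hTj hi
    · rw [Finset.card_insert_of_notMem haT, hTcard]; omega
  have hSb : ∑ i ∈ insert b T, d i = w := by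
    refine h _ ?_ ?_
    · intro i hi
      rcases Finset.mem_insert.mp hi with rfl | hi
      · simp [hb]
      · exact hTj hi
    · rw [Finset.card_insert_of_notMem hbT, hTcard]; omega
  rw [Finset.sum_insert haT] at hSa
  rw [Finset.sum_insert hbT] at hSb
  have := hSa.trans hSb.symm
  linear_combination this

/-- `e_m` does not vanish identically on any hyperplane `{x : ⟨d, x⟩ = 0}` with `d ≠ 0`,
for `3 ≤ m ≤ n - 2`. -/
lemma exists_on_hyperplane {n m : ℕ} (hm : 3 ≤ m) (hn : m + 2 ≤ n) (d : Fin n → ℂ)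
    (hd : d ≠ 0) :
    ∃ x : Fin n → ℂ, (∑ j, d j * x j = 0) ∧ esymm n m x ≠ 0 := by
  classical
  by_contra hcon
  push_neg at hcon
  have hm0 : (m : ℂ) ≠ 0 := Nat.cast_ne_zero.mpr (by omega)
  -- the key consequence of vanishing on the hyperplane
  have key : ∀ j : Fin n, d j ≠ 0 → ∀ S ⊆ Finset.univ.erase j, S.card = m →
      (m : ℂ) * ∑ i ∈ S, d i = d j := by
    intro j hj S hS hScard
    have hjS : j ∉ S := fun h => by simpa using hS h
    set t : ℂ := -(∑ i ∈ S, d i) / d j with ht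
    set x : Fin n → ℂ := fun i => if i ∈ S then 1 else if i = j then t else 0 with hx
    have htd : t * d j = -(∑ i ∈ S, d i) := by
      rw [ht]; field_simp
    have hdot : ∑ k, d k * x k = 0 := by
      have hzero : ∀ k ∈ Finset.univ, k ∉ insert j S → d k * x k = 0 := by
        intro k _ hk
        simp only [Finset.mem_insert, not_or] at hk
        simp [hx, hk.1, hk.2]
      rw [← Finset.sum_subset (Finset.subset_univ (insert j S)) hzero,
        Finset.sum_insert hjS]
      have h1 : ∀ k ∈ S, d k * x k = d k := fun k hk => by simp [hx, hk]
      rw [Finset.sum_congr rfl h1]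
      have hxj : x j = t := by simp [hx, hjS]
      rw [hxj]
      linear_combination htd
    have hes := hcon x hdot
    obtain ⟨m', rfl⟩ : ∃ m', m = m' + 1 := ⟨m - 1, by omega⟩
    rw [esymm_indicator n m' j S hjS (by omega) t] at hes
    push_cast
    linear_combination ((m' : ℂ) + 1) * htd - d j * hes
  -- pick j with d j ≠ 0
  obtain ⟨j, hj⟩ := Function.ne_iff.mp hd
  have hconst := eq_of_sum_const (m := m) (by omega) hn j d (d j / m) (fun S hS hSc => by
    rw [eq_div_iff hm0]
    linear_combination key j hj S hS hSc)
  -- find a second index j' ≠ j with d j' ≠ 0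
  have hcard : m ≤ (Finset.univ.erase j).card := by
    rw [Finset.card_erase_of_mem (Finset.mem_univ j), Finset.card_univ, Fintype.card_fin]
    omega
  obtain ⟨S₀, hS₀sub, hS₀card⟩ := Finset.exists_subset_card_eq hcard
  have hsum₀ : (m : ℂ) * ∑ i ∈ S₀, d i = d j := key j hj S₀ hS₀sub hS₀card
  have hex : ∃ j' ∈ S₀, d j' ≠ 0 := by
    by_contra hno
    push_neg at hno
    rw [Finset.sum_congr rfl hno] at hsum₀
    simp at hsum₀
    exact hj hsum₀.symm
  obtain ⟨j', hj'S₀, hj'⟩ := hex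
  have hj'ne : j' ≠ j := Finset.ne_of_mem_erase (hS₀sub hj'S₀)
  have hconst' := eq_of_sum_const (m := m) (by omega) hn j' d (d j' / m) (fun S hS hSc => by
    rw [eq_div_iff hm0]
    linear_combination key j' hj' S hS hSc)
  -- pick i₀ different from j and j'
  have hne2 : (Finset.univ \ ({j, j'} : Finset (Fin n))).Nonempty := by
    rw [← Finset.card_pos, Finset.card_sdiff_of_subset (Finset.subset_univ _), Finset.card_univ,
      Fintype.card_fin]
    have h2 : ({j, j'} : Finset (Fin n)).card ≤ 2 :=
      le_trans (Finset.card_insert_le _ _) (by simp)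
    omega
  obtain ⟨i₀, hi₀⟩ := hne2
  simp only [Finset.mem_sdiff, Finset.mem_insert, Finset.mem_singleton, not_or] at hi₀
  have e1 : d j = d i₀ := hconst' j i₀ hj'ne.symm hi₀.2.2
  have e2 : d i₀ = d j' := hconst i₀ j' hi₀.2.1 hj'ne
  have hdj : d j = d j' := e1.trans e2
  have hSsum : ∑ i ∈ S₀, d i = (m : ℂ) * d j' := by
    have hall : ∀ i ∈ S₀, d i = d j' := fun i hi =>
      hconst i j' (Finset.ne_of_mem_erase (hS₀sub hi)) hj'ne
    rw [Finset.sum_congr rfl hall, Finset.sum_const, hS₀card, nsmul_eq_mul]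
  rw [hSsum, hdj] at hsum₀
  have hfin : ((m : ℂ) ^ 2 - 1) * d j' = 0 := by linear_combination hsum₀
  have hmne : ((m : ℂ) ^ 2 - 1) ≠ 0 := by
    intro h0
    have h1 : ((m ^ 2 : ℕ) : ℂ) = ((1 : ℕ) : ℂ) := by push_cast; linear_combination h0
    have h2 := Nat.cast_injective h1
    nlinarith [h2]
  exact hj' ((mul_eq_zero.mp hfin).resolve_left hmne)

/-- The linear substitution given by a matrix `M`. -/
noncomputable def lin {n : ℕ} (M : Matrix (Fin n) (Fin n) ℂ) :
    Fin n → MvPolynomial (Fin n) ℂ :=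
  fun i => ∑ j, MvPolynomial.C (M i j) * MvPolynomial.X j

lemma eval_bind_lin {n : ℕ} (M : Matrix (Fin n) (Fin n) ℂ)
    (p : MvPolynomial (Fin n) ℂ) (x : Fin n → ℂ) :
    MvPolynomial.eval x (MvPolynomial.bind₁ (lin M) p)
      = MvPolynomial.eval (M.mulVec x) p := by
  rw [eval_bind]
  have h : (fun i => MvPolynomial.eval x (lin M i)) = M.mulVec x := by
    funext i
    simp [lin, Matrix.mulVec, dotProduct]
  rw [h]

/-- The projection substitution onto the hyperplane `∑ x = 0`. -/
noncomputable def proj (n : ℕ) : Fin n → MvPolynomial (Fin n) ℂ :=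
  fun i => MvPolynomial.X i - MvPolynomial.C ((n : ℂ)⁻¹) * ∑ j, MvPolynomial.X j

lemma eval_proj {n : ℕ} (x : Fin n → ℂ) (i : Fin n) :
    MvPolynomial.eval x (proj n i) = x i - (n : ℂ)⁻¹ * ∑ j, x j := by
  simp [proj]

/-- Let `3 < r < n` and suppose `g ∈ GLₙ(ℂ)` preserves `e₁ · e_{r-1}`.
Then there is `α ≠ 0` with `e₁(g·x) = α·e₁(x)` and `e_{r-1}(g·x) = α⁻¹·e_{r-1}(x)` for
all `x`. -/
theorem factors_scale (n r : ℕ) (hr : 3 < r) (hrn : r < n)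
    (g : Matrix (Fin n) (Fin n) ℂ) (hg : IsUnit g)
    (hstab : ∀ x : Fin n → ℂ,
      esymm n 1 (g.mulVec x) * esymm n (r - 1) (g.mulVec x) =
        esymm n 1 x * esymm n (r - 1) x) :
    ∃ α : ℂ, α ≠ 0 ∧ ∀ x : Fin n → ℂ,
      esymm n 1 (g.mulVec x) = α * esymm n 1 x ∧
      esymm n (r - 1) (g.mulVec x) = α⁻¹ * esymm n (r - 1) x := by
  classical
  have hm3 : 3 ≤ r - 1 := by omega
  have hmn : (r - 1) + 2 ≤ n := by omega
  have hn0 : (n : ℂ) ≠ 0 := Nat.cast_ne_zero.mpr (by omega)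
  have hdet : IsUnit g.det := (Matrix.isUnit_iff_isUnit_det g).mp hg
  have hgh : g * g⁻¹ = 1 := Matrix.mul_nonsing_inv g hdet
  have hhg : g⁻¹ * g = 1 := Matrix.nonsing_inv_mul g hdet
  set E1 : MvPolynomial (Fin n) ℂ := MvPolynomial.esymm (Fin n) ℂ 1 with hE1
  set Em : MvPolynomial (Fin n) ℂ := MvPolynomial.esymm (Fin n) ℂ (r - 1) with hEm
  -- the fundamental polynomial identity
  have hid : (MvPolynomial.bind₁ (lin g) E1) * (MvPolynomial.bind₁ (lin g) Em) = E1 * Em := by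
    apply MvPolynomial.funext
    intro x
    rw [map_mul, map_mul, eval_bind_lin, eval_bind_lin, hE1, hEm, ← esymm_eq_eval,
      ← esymm_eq_eval, ← esymm_eq_eval, ← esymm_eq_eval]
    exact hstab x
  -- composing with the projection kills E1
  have hpsiE1 : MvPolynomial.bind₁ (proj n) E1 = 0 := by
    apply MvPolynomial.funext
    intro x
    rw [eval_bind, map_zero, hE1, ← esymm_eq_eval, esymm_one_apply]
    simp only [eval_proj]
    rw [Finset.sum_sub_distrib, Finset.sum_const, Finset.card_univ, Fintype.card_fin,
      nsmul_eq_mul]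
    field_simp
    ring
  -- column sums of the inverse give a nonzero functional
  set d : Fin n → ℂ := fun j => ∑ i, g⁻¹ i j with hd
  have hdot : ∀ y : Fin n → ℂ, ∑ j, d j * y j = ∑ i, (g⁻¹).mulVec y i := by
    intro y
    simp only [hd, Matrix.mulVec, dotProduct, Finset.sum_mul]
    rw [Finset.sum_comm]
  have hdne : d ≠ 0 := by
    intro h0
    have h1 := hdot (g.mulVec (fun _ => 1))
    rw [Matrix.mulVec_mulVec, hhg, Matrix.one_mulVec] at h1
    simp [h0] at h1
    exact hn0 h1.symm
  obtain ⟨y, hy0, hyne⟩ := exists_on_hyperplane hm3 hmn d hdne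
  set x₀ : Fin n → ℂ := (g⁻¹).mulVec y with hx₀
  have hx₀sum : ∑ j, x₀ j = 0 := by rw [hx₀, ← hdot, hy0]
  have hgx₀ : g.mulVec x₀ = y := by
    rw [hx₀, Matrix.mulVec_mulVec, hgh, Matrix.one_mulVec]
  have hPfix : (fun i => MvPolynomial.eval x₀ (proj n i)) = x₀ := by
    funext i
    rw [eval_proj, hx₀sum]
    ring
  have hpsiQ : MvPolynomial.bind₁ (proj n) (MvPolynomial.bind₁ (lin g) Em) ≠ 0 := by
    intro h0
    have h1 := congrArg (MvPolynomial.eval x₀) h0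
    rw [eval_bind, hPfix, eval_bind_lin, hgx₀, hEm, ← esymm_eq_eval, map_zero] at h1
    exact hyne h1
  have hpsiprod : (MvPolynomial.bind₁ (proj n) (MvPolynomial.bind₁ (lin g) E1)) *
      (MvPolynomial.bind₁ (proj n) (MvPolynomial.bind₁ (lin g) Em)) = 0 := by
    rw [← map_mul, hid, map_mul, hpsiE1, zero_mul]
  have hpsiL : MvPolynomial.bind₁ (proj n) (MvPolynomial.bind₁ (lin g) E1) = 0 :=
    (mul_eq_zero.mp hpsiprod).resolve_right hpsiQ
  -- the linear form e₁ ∘ g has coefficients c j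
  set c : Fin n → ℂ := fun j => ∑ i, g i j with hc
  have hLc : ∀ x : Fin n → ℂ, esymm n 1 (g.mulVec x) = ∑ j, c j * x j := by
    intro x
    rw [esymm_one_apply]
    simp only [hc, Matrix.mulVec, dotProduct, Finset.sum_mul]
    rw [Finset.sum_comm]
  set α : ℂ := (n : ℂ)⁻¹ * ∑ j, c j with hα
  have hcα : ∀ a, c a = α := by
    intro a
    set xa : Fin n → ℂ := fun i => if i = a then (1 : ℂ) else 0 with hxa
    have h1 := congrArg (MvPolynomial.eval xa) hpsiL
    rw [eval_bind, map_zero] at h1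
    have hsum1 : ∑ j, xa j = 1 := by simp [hxa]
    have h2 : (fun i => MvPolynomial.eval xa (proj n i)) = fun i => xa i - (n : ℂ)⁻¹ := by
      funext i
      rw [eval_proj, hsum1, mul_one]
    rw [h2, eval_bind_lin, hE1, ← esymm_eq_eval, hLc] at h1
    have h3 : ∑ j, c j * ((fun i => xa i - (n : ℂ)⁻¹) j) =
        c a - (n : ℂ)⁻¹ * ∑ j, c j := by
      simp only [mul_sub]
      rw [Finset.sum_sub_distrib]
      congr 1
      · simp [hxa, mul_comm]
      · rw [Finset.mul_sum]
        apply Finset.sum_congr rfl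
        intro j _
        ring
    rw [h3] at h1
    rw [hα]
    linear_combination h1
  have hαne : α ≠ 0 := by
    intro h0
    have h1 := hstab (fun _ => 1)
    rw [hLc, esymm_one_apply, esymm_ones] at h1
    have hz : ∑ j, c j * (1 : ℂ) = 0 := by
      refine Finset.sum_eq_zero fun j _ => ?_
      rw [hcα j, h0, zero_mul]
    rw [hz, zero_mul] at h1
    have hchoose : (n.choose (r - 1) : ℂ) ≠ 0 :=
      Nat.cast_ne_zero.mpr (Nat.choose_pos (by omega)).ne'
    have hsum : ∑ _i : Fin n, (1 : ℂ) = (n : ℂ) := by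
      rw [Finset.sum_const, Finset.card_univ, Fintype.card_fin, nsmul_eq_mul, mul_one]
    rw [hsum] at h1
    exact hn0 (by
      rcases mul_eq_zero.mp h1.symm with h | h
      · exact h
      · exact absurd h hchoose)
  have hfirst : ∀ x : Fin n → ℂ, esymm n 1 (g.mulVec x) = α * esymm n 1 x := by
    intro x
    rw [hLc, esymm_one_apply, Finset.mul_sum]
    apply Finset.sum_congr rfl
    intro j _
    rw [hcα j]
  -- second factor
  have hsbE1 : MvPolynomial.bind₁ (lin g) E1 = MvPolynomial.C α * E1 := by
    apply MvPolynomial.funext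
    intro x
    rw [eval_bind_lin, map_mul, MvPolynomial.eval_C, hE1, ← esymm_eq_eval, ← esymm_eq_eval]
    exact hfirst x
  have hE1ne : E1 ≠ 0 := by
    intro h0
    have h1 := congrArg (MvPolynomial.eval (fun _ => (1 : ℂ))) h0
    rw [map_zero, hE1, ← esymm_eq_eval, esymm_one_apply] at h1
    rw [Finset.sum_const, Finset.card_univ, Fintype.card_fin, nsmul_eq_mul, mul_one] at h1
    exact hn0 h1
  have hsecondpoly : MvPolynomial.C α * MvPolynomial.bind₁ (lin g) Em = Em := by
    have h1 : E1 * (MvPolynomial.C α * MvPolynomial.bind₁ (lin g) Em - Em) = 0 := by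
      rw [hsbE1] at hid
      ring_nf
      ring_nf at hid
      linear_combination hid
    rcases mul_eq_zero.mp h1 with h | h
    · exact absurd h hE1ne
    · linear_combination h
  refine ⟨α, hαne, fun x => ⟨hfirst x, ?_⟩⟩
  have h2 := congrArg (MvPolynomial.eval x) hsecondpoly
  rw [map_mul, MvPolynomial.eval_C, eval_bind_lin, hEm, ← esymm_eq_eval, ← esymm_eq_eval] at h2
  field_simp
  linear_combination h2
end
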